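/- Evaluation at the special point: with x₁ = 1 (identity matrix) and x₂ = diag(i, −i) = [[√−1, 0],[0, −√−1]], one has ⟨P(x₁,x₂), (X²+Y²)^{k₂}⟩_{2k₂} = (−2√−1)^{k₁+k₂}·(X₁Y₁)^{k₁} ⊗ (X₂Y₂)^{k₂}, where P is as in the definition of the archimedean test polynomial and the pairing ⟨·,·⟩_{2k₂} is applied in the X,Y-variables. -/

import Mathlib

open MvPolynomial Matrix

/-- The base ring `B = ℂ[X₁,Y₁,X₂,Y₂]` (with `X 0 = X₁`, `X 1 = Y₁`,
`X 2 = X₂`, `X 3 = Y₂`). -/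
noncomputable abbrev B4 := MvPolynomial (Fin 4) ℂ

/-- The outer ring `B[X,Y]`. -/
noncomputable abbrev Outer := MvPolynomial (Fin 2) B4

/-- `p([[a,b],[c,-a]]) = -b X₁² + 2a X₁Y₁ + c Y₁²`. -/
noncomputable def pB (m : Matrix (Fin 2) (Fin 2) ℂ) : B4 :=
  C (-(m 0 1)) * X 0 ^ 2 + C (2 * m 0 0) * X 0 * X 1 + C (m 1 0) * X 1 ^ 2

/-- `J = [[0,1],[-1,0]]`. -/
noncomputable def JmB : Matrix (Fin 2) (Fin 2) B4 := ![![0, 1], ![-1, 0]]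

/-- `W = [[X₁X₂, X₁Y₂],[Y₁X₂, Y₁Y₂]]`. -/
noncomputable def WmB : Matrix (Fin 2) (Fin 2) B4 :=
  ![![X 0 * X 2, X 0 * X 3], ![X 1 * X 2, X 1 * X 3]]

/-- `q(x) = Tr(x* · J · W)`. -/
noncomputable def qB (m : Matrix (Fin 2) (Fin 2) ℂ) : B4 :=
  Matrix.trace (m.adjugate.map (C : ℂ →+* B4) * JmB * WmB)

/-- The special points `x₁ = 1` and `x₂ = diag(√-1, −√-1)`. -/
noncomputable def xOne : Matrix (Fin 2) (Fin 2) ℂ := 1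

noncomputable def xI : Matrix (Fin 2) (Fin 2) ℂ :=
  ![![Complex.I, 0], ![0, -Complex.I]]

/-- `P(x₁,x₂) = Σ_α p(x₁x₂* − ½Tr(x₁x₂*)·1)^{k₁−k₂}·q(x₁)^α·q(x₂)^{2k₂−α}
      ⊗ C(2k₂,α)·X^α·Y^{2k₂−α}`, as a polynomial in `X, Y` with coefficients
in `B = ℂ[X₁,Y₁,X₂,Y₂]`. -/
noncomputable def Pspec (k₁ k₂ : ℕ) : Outer :=
  ∑ α ∈ Finset.range (2 * k₂ + 1),
    C (pB (xOne * xI.adjugate -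
            ((1/2 : ℂ) * Matrix.trace (xOne * xI.adjugate)) •
              (1 : Matrix (Fin 2) (Fin 2) ℂ)) ^ (k₁ - k₂) *
        qB xOne ^ α * qB xI ^ (2 * k₂ - α)) *
      (((2 * k₂).choose α : Outer)) * X 0 ^ α * X 1 ^ (2 * k₂ - α)

/-- The pairing `⟨·,·⟩_{2k₂}` in the `X, Y` variables, with values in `B`. -/
noncomputable def pairB (n : ℕ) (P Q : Outer) : B4 :=
  ∑ i ∈ Finset.range (n + 1),
    (-1 : B4) ^ i * C ((((n.choose i : ℕ) : ℂ))⁻¹) *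
      coeff (Finsupp.single 0 i + Finsupp.single 1 (n - i)) P *
      coeff (Finsupp.single 0 (n - i) + Finsupp.single 1 i) Q

open MvPolynomial Matrix

lemma pB_val : pB (xOne * xI.adjugate -
            ((1/2 : ℂ) * Matrix.trace (xOne * xI.adjugate)) •
              (1 : Matrix (Fin 2) (Fin 2) ℂ)) = C (-2*Complex.I) * X 0 * X 1 := by
  rw [Matrix.adjugate_fin_two]
  simp [pB, xOne, xI, Matrix.adjugate_fin_two, Matrix.trace_fin_two, Matrix.one_apply]

lemma qB_one : qB xOne = X 1 * X 2 - X 0 * X 3 := by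
  simp only [qB, Matrix.trace_fin_two, Matrix.mul_apply, Fin.sum_univ_two, Matrix.adjugate_fin_two, Matrix.map_apply]
  simp [qB, xOne, JmB, WmB, Matrix.trace_fin_two, Matrix.mul_apply, Fin.sum_univ_two,
    Matrix.adjugate_fin_two, Matrix.one_apply]
  ring

lemma qB_I : qB xI = C (-Complex.I) * (X 1 * X 2 + X 0 * X 3) := by
  simp only [qB, Matrix.trace_fin_two, Matrix.mul_apply, Fin.sum_univ_two, Matrix.adjugate_fin_two, Matrix.map_apply]
  simp [qB, xI, JmB, WmB, Matrix.trace_fin_two, Matrix.mul_apply, Fin.sum_univ_two,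
    Matrix.adjugate_fin_two]
  ring

open MvPolynomial Matrix Finset

set_option maxRecDepth 10000
set_option maxHeartbeats 1000000

lemma fs_eq (a b c d : ℕ) :
    (Finsupp.single (0 : Fin 2) a + Finsupp.single 1 b =
      Finsupp.single 0 c + Finsupp.single 1 d) ↔ a = c ∧ b = d := by
  constructor
  · intro h
    have h0 := DFunLike.congr_fun h 0
    have h1 := DFunLike.congr_fun h 1
    simp only [Finsupp.add_apply, Finsupp.single_eq_same,
      Finsupp.single_eq_of_ne (by decide : (0:Fin 2) ≠ 1),
      Finsupp.single_eq_of_ne (by decide : (1:Fin 2) ≠ 0), add_zero, zero_add] at h0 h1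
    exact ⟨h0, h1⟩
  · rintro ⟨rfl, rfl⟩; rfl

lemma mono (c : B4) (a b : ℕ) :
    (C c * X 0 ^ a * X 1 ^ b : Outer) =
      monomial (Finsupp.single 0 a + Finsupp.single 1 b) c := by
  rw [X_pow_eq_monomial, X_pow_eq_monomial, C_apply, monomial_mul, monomial_mul,
    mul_one, mul_one, zero_add]

lemma coeff_pow_sq (k i : ℕ) :
    coeff (Finsupp.single 0 (2*k - i) + Finsupp.single 1 i)
      ((X 0 ^ 2 + X 1 ^ 2 : Outer) ^ k) =
      if 2 ∣ i ∧ i ≤ 2*k then C ((k.choose (i/2) : ℂ)) else 0 := by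
  rw [add_pow]
  have h : ∀ j, ((X 0:Outer) ^ 2) ^ j * (X 1 ^ 2) ^ (k - j) * (k.choose j : Outer)
      = monomial (Finsupp.single 0 (2*j) + Finsupp.single 1 (2*(k-j)))
          (C ((k.choose j : ℂ))) := by
    intro j
    rw [← pow_mul, ← pow_mul]
    have : ((k.choose j : ℕ) : Outer) = MvPolynomial.C (C ((k.choose j : ℂ))) := by
      simp
    rw [this]
    rw [show (X (0:Fin 2) : Outer) ^ (2*j) * X 1 ^ (2*(k-j)) * MvPolynomial.C (C ((k.choose j : ℂ)))
      = MvPolynomial.C (C ((k.choose j : ℂ))) * X 0 ^ (2*j) * X 1 ^ (2*(k-j)) by ring, mono]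
  simp only [h, coeff_sum, coeff_monomial, fs_eq]
  by_cases hi : 2 ∣ i ∧ i ≤ 2*k
  · obtain ⟨⟨m, rfl⟩, hle⟩ := hi
    rw [Finset.sum_eq_single_of_mem (k - m) (by simp only [Finset.mem_range]; omega)]
    · rw [if_pos (by omega)]
      have h2 : 2*m/2 = m := by omega
      rw [h2, ← Nat.choose_symm (by omega : m ≤ k)]
      rw [if_pos (by omega)]
    · intro j hj hne
      simp only [Finset.mem_range] at hj
      rw [if_neg]; omega
  · rw [if_neg hi, Finset.sum_eq_zero]
    intro j hj
    simp only [Finset.mem_range] at hj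
    rw [if_neg]; omega

open MvPolynomial Matrix Finset

lemma hab : (qB xOne)^2 + (qB xI)^2 = C (-4:ℂ) * (X 1 * X 2 * (X 0 * X 3)) := by
  rw [qB_one, qB_I]
  have hI : (C (-Complex.I) : B4)^2 = C (-1 : ℂ) := by
    rw [← map_pow]; congr 1; simp [pow_two]
  rw [mul_pow, hI]
  have h1 : (C (-1:ℂ) : B4) = -1 := by simp
  have h4 : (C (-4:ℂ) : B4) = -4 := by
    rw [show (-4:ℂ) = ((-4:ℤ):ℂ) by norm_num, map_intCast]; norm_num
  rw [h1, h4]; ring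

lemma filt (k : ℕ) : (Finset.range (2*k+1)).filter (fun i => 2 ∣ i)
    = (Finset.range (k+1)).image (fun j => 2*j) := by
  ext m
  simp only [Finset.mem_filter, Finset.mem_image, Finset.mem_range]
  constructor
  · rintro ⟨h1, c, rfl⟩
    exact ⟨c, by omega, by omega⟩
  · rintro ⟨j, hj, rfl⟩
    exact ⟨by omega, j, rfl⟩

lemma coeff_Pspec (k₁ k₂ i : ℕ) (hi : i ≤ 2*k₂) :
    coeff (Finsupp.single 0 i + Finsupp.single 1 (2*k₂ - i)) (Pspec k₁ k₂) =
      pB (xOne * xI.adjugate -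
            ((1/2 : ℂ) * Matrix.trace (xOne * xI.adjugate)) •
              (1 : Matrix (Fin 2) (Fin 2) ℂ)) ^ (k₁ - k₂) *
        qB xOne ^ i * qB xI ^ (2 * k₂ - i) * (((2 * k₂).choose i : ℕ) : B4) := by
  unfold Pspec
  have h : ∀ α, C (pB (xOne * xI.adjugate -
            ((1/2 : ℂ) * Matrix.trace (xOne * xI.adjugate)) •
              (1 : Matrix (Fin 2) (Fin 2) ℂ)) ^ (k₁ - k₂) *
        qB xOne ^ α * qB xI ^ (2 * k₂ - α)) *
      (((2 * k₂).choose α : Outer)) * X 0 ^ α * X 1 ^ (2 * k₂ - α)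
      = monomial (Finsupp.single 0 α + Finsupp.single 1 (2*k₂ - α))
          (pB (xOne * xI.adjugate -
            ((1/2 : ℂ) * Matrix.trace (xOne * xI.adjugate)) •
              (1 : Matrix (Fin 2) (Fin 2) ℂ)) ^ (k₁ - k₂) *
        qB xOne ^ α * qB xI ^ (2 * k₂ - α) * (((2 * k₂).choose α : ℕ) : B4)) := by
    intro α
    rw [show (((2 * k₂).choose α : ℕ) : Outer) = MvPolynomial.C ((((2 * k₂).choose α : ℕ)) : B4) by
      simp, ← _root_.map_mul, mono]
  simp only [h, coeff_sum, coeff_monomial, fs_eq]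
  rw [Finset.sum_eq_single_of_mem i (by simp; omega)]
  · rw [if_pos ⟨rfl, rfl⟩]
  · intro j hj hne
    rw [if_neg (fun hc => hne hc.1)]


/-- Evaluation at the special point:
`⟨P(1, diag(i,−i)), (X²+Y²)^{k₂}⟩_{2k₂} = (−2√-1)^{k₁+k₂}·(X₁Y₁)^{k₁}⊗(X₂Y₂)^{k₂}`. -/
theorem Pspec_pairing (k₁ k₂ : ℕ) (hk : k₂ ≤ k₁) :
    pairB (2 * k₂) (Pspec k₁ k₂) ((X 0 ^ 2 + X 1 ^ 2) ^ k₂) =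
      C ((-2 * Complex.I) ^ (k₁ + k₂)) * (X 0 * X 1) ^ k₁ * (X 2 * X 3) ^ k₂ := by
  obtain ⟨e, rfl⟩ : ∃ e, k₁ = e + k₂ := ⟨k₁ - k₂, by omega⟩
  unfold pairB
  have step : ∀ i ∈ Finset.range (2*k₂ + 1),
      (-1 : B4) ^ i * C (((((2*k₂).choose i : ℕ) : ℂ))⁻¹) *
        coeff (Finsupp.single 0 i + Finsupp.single 1 (2*k₂ - i)) (Pspec (e + k₂) k₂) *
        coeff (Finsupp.single 0 (2*k₂ - i) + Finsupp.single 1 i) ((X 0 ^ 2 + X 1 ^ 2 : Outer) ^ k₂)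
      = if 2 ∣ i then
          pB (xOne * xI.adjugate -
            ((1/2 : ℂ) * Matrix.trace (xOne * xI.adjugate)) •
              (1 : Matrix (Fin 2) (Fin 2) ℂ)) ^ (e + k₂ - k₂) *
          qB xOne ^ i * qB xI ^ (2 * k₂ - i) * C ((k₂.choose (i/2) : ℂ))
        else 0 := by
    intro i hi
    rw [Finset.mem_range] at hi
    rw [coeff_Pspec _ _ i (by omega), coeff_pow_sq k₂ i]
    by_cases h2 : 2 ∣ i
    · rw [if_pos ⟨h2, by omega⟩, if_pos h2]
      have hc : ((((2*k₂).choose i : ℕ)) : ℂ) ≠ 0 :=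
        Nat.cast_ne_zero.mpr (Nat.choose_pos (by omega)).ne'
      have e1 : (C (((((2*k₂).choose i : ℕ)) : ℂ))⁻¹ : B4) * (((2*k₂).choose i : ℕ) : B4) = 1 := by
        rw [show ((((2*k₂).choose i : ℕ)) : B4) = C (((((2*k₂).choose i : ℕ)) : ℂ)) by simp,
          ← _root_.map_mul, inv_mul_cancel₀ hc, _root_.map_one]
      obtain ⟨m, rfl⟩ := h2
      have en : ((-1 : B4)) ^ (2*m) = 1 := by
        rw [pow_mul, neg_one_sq, one_pow]
      rw [en]
      linear_combination (pB (xOne * xI.adjugate -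
            ((1/2 : ℂ) * Matrix.trace (xOne * xI.adjugate)) •
              (1 : Matrix (Fin 2) (Fin 2) ℂ)) ^ (e + k₂ - k₂) *
          qB xOne ^ (2*m) * qB xI ^ (2 * k₂ - 2*m) * C ((k₂.choose ((2*m)/2) : ℂ))) * e1
    · rw [if_neg (fun hc => h2 hc.1), if_neg h2, mul_zero]
  rw [Finset.sum_congr rfl step, ← Finset.sum_filter, filt k₂,
    Finset.sum_image (fun a _ b _ h => by omega)]
  have step2 : ∀ j ∈ Finset.range (k₂ + 1),
      pB (xOne * xI.adjugate -
            ((1/2 : ℂ) * Matrix.trace (xOne * xI.adjugate)) •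
              (1 : Matrix (Fin 2) (Fin 2) ℂ)) ^ (e + k₂ - k₂) *
          qB xOne ^ (2*j) * qB xI ^ (2 * k₂ - 2*j) * C ((k₂.choose ((2*j)/2) : ℂ))
      = (C (-2*Complex.I) * X 0 * X 1) ^ e *
          ((qB xOne ^ 2) ^ j * (qB xI ^ 2) ^ (k₂ - j) * (k₂.choose j : B4)) := by
    intro j hj
    rw [Finset.mem_range] at hj
    rw [pB_val, show e + k₂ - k₂ = e by omega, show (2*j)/2 = j by omega,
      ← pow_mul, ← pow_mul, show 2 * k₂ - 2*j = 2 * (k₂ - j) by omega,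
      show ((k₂.choose j : ℕ) : B4) = C ((k₂.choose j : ℕ) : ℂ) by simp]
    ring
  rw [Finset.sum_congr rfl step2, ← Finset.mul_sum, ← add_pow, hab]
  have hC : (C (-2*Complex.I) : B4)^e * (C (-4:ℂ))^k₂ = C ((-2*Complex.I)^(e + k₂ + k₂)) := by
    rw [← map_pow, ← map_pow, ← _root_.map_mul]
    congr 1
    have h4 : (-4:ℂ) = (-2*Complex.I)^2 := by
      rw [mul_pow, Complex.I_sq]; norm_num
    rw [h4, ← pow_mul, ← pow_add]
    congr 1
    omega
  calc (C (-2*Complex.I) * X 0 * X 1 : B4) ^ e * (C (-4:ℂ) * (X 1 * X 2 * (X 0 * X 3))) ^ k₂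
      = ((C (-2*Complex.I) : B4)^e * (C (-4:ℂ))^k₂) * ((X 0 * X 1) ^ (e + k₂) * (X 2 * X 3) ^ k₂) := by
        ring
    _ = C ((-2*Complex.I)^(e + k₂ + k₂)) * (X 0 * X 1) ^ (e + k₂) * (X 2 * X 3) ^ k₂ := by
        rw [hC]; ring
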